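/- arXiv:2312.02667 — 2 statements merged into one kernel-verified Lean document; each statement's English description precedes it below -/
import Mathlib

section
/- Let the MPS be in canonical form and suppose its wavefunction is normalized, i.e. Σ_σ |Ψ(σ)|² = 1. Then for any truncation rank χ' ≥ 1, the parallel MPS compression satisfies Σ_σ |Ψ(σ) − Ψ̃_T(σ)|² ≤ 2 ε(χ'), where ε(χ') = Σ_{i=1}^{N−1} ε_i(χ') is the global truncation error. -/
open Matrix

/-- Partial product `Λ⁰ Γ¹ Λ¹ ⋯ Γⁱ Λⁱ` of an MPS; the tensor `Γ i` is the site tensor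
of site `i + 1` (sites are numbered `1, …, N`, bonds `0, 1, …, N`). -/
noncomputable def mpsW {d : ℕ} (χ : ℕ → ℕ)
    (Γ : (i : ℕ) → Fin d → Matrix (Fin (χ i)) (Fin (χ (i + 1))) ℂ)
    (Λ : (i : ℕ) → Matrix (Fin (χ i)) (Fin (χ i)) ℂ) :
    (i : ℕ) → (ℕ → Fin d) → Matrix (Fin (χ 0)) (Fin (χ i)) ℂ
  | 0, _ => Λ 0
  | (i + 1), σ => mpsW χ Γ Λ i σ * Γ i (σ i) * Λ (i + 1)

/-- The MPS wavefunction `Ψ(σ)`: the unique entry (written as the sum of all entries) of the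
`1 × 1` matrix `Λ⁰ Γ¹ Λ¹ Γ² Λ² ⋯ Γᴺ Λᴺ` (the bond dimensions satisfy `χ 0 = χ N = 1`). -/
noncomputable def mpsPsi {d : ℕ} [NeZero d] (N : ℕ) (χ : ℕ → ℕ)
    (Γ : (i : ℕ) → Fin d → Matrix (Fin (χ i)) (Fin (χ (i + 1))) ℂ)
    (Λ : (i : ℕ) → Matrix (Fin (χ i)) (Fin (χ i)) ℂ)
    (σ : Fin N → Fin d) : ℂ :=
  ∑ a, ∑ b, mpsW χ Γ Λ N (fun k => if h : k < N then σ ⟨k, h⟩ else 0) a b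

/-- The diagonal projector `P` onto the first `χ'` basis vectors. -/
noncomputable def truncP (χ' k : ℕ) : Matrix (Fin k) (Fin k) ℂ :=
  Matrix.diagonal fun α => if (α : ℕ) < χ' then 1 else 0

/-- Partial product of the truncated MPS, with the projector `P` inserted at every
interior bond `i = 1, …, N - 1`. -/
noncomputable def mpsWT {d : ℕ} (N χ' : ℕ) (χ : ℕ → ℕ)
    (Γ : (i : ℕ) → Fin d → Matrix (Fin (χ i)) (Fin (χ (i + 1))) ℂ)
    (Λ : (i : ℕ) → Matrix (Fin (χ i)) (Fin (χ i)) ℂ) :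
    (i : ℕ) → (ℕ → Fin d) → Matrix (Fin (χ 0)) (Fin (χ i)) ℂ
  | 0, _ => Λ 0
  | (i + 1), σ => mpsWT N χ' χ Γ Λ i σ * Γ i (σ i) * Λ (i + 1) *
      (if i + 1 < N then truncP χ' (χ (i + 1)) else 1)

/-- The truncated wavefunction `Ψ̃_T(σ)`: the unique entry of
`Λ⁰ Γ¹ Λ¹ P₁ Γ² Λ² P₂ ⋯ P_{N-1} Γᴺ Λᴺ`. -/
noncomputable def mpsPsiT {d : ℕ} [NeZero d] (N χ' : ℕ) (χ : ℕ → ℕ)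
    (Γ : (i : ℕ) → Fin d → Matrix (Fin (χ i)) (Fin (χ (i + 1))) ℂ)
    (Λ : (i : ℕ) → Matrix (Fin (χ i)) (Fin (χ i)) ℂ)
    (σ : Fin N → Fin d) : ℂ :=
  ∑ a, ∑ b, mpsWT N χ' χ Γ Λ N (fun k => if h : k < N then σ ⟨k, h⟩ else 0) a b

/-- Canonical form: for every site `i + 1` (`i < N`), with `A = Λ i * Γ i s` and
`B = Γ i s * Λ (i+1)`, one has `∑ s, Aᴴ A = 1` and `∑ s, B Bᴴ = 1`. -/
noncomputable def IsCanonicalMPS {d : ℕ} (N : ℕ) (χ : ℕ → ℕ)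
    (Γ : (i : ℕ) → Fin d → Matrix (Fin (χ i)) (Fin (χ (i + 1))) ℂ)
    (Λ : (i : ℕ) → Matrix (Fin (χ i)) (Fin (χ i)) ℂ) : Prop :=
  ∀ i < N,
    (∑ s : Fin d, (Λ i * Γ i s)ᴴ * (Λ i * Γ i s) = 1) ∧
    (∑ s : Fin d, (Γ i s * Λ (i + 1)) * (Γ i s * Λ (i + 1))ᴴ = 1)

/-- Local truncation error `ε_i(χ') = ∑_{α ≥ χ'} (Λ^{[i]}_{αα})²`. -/
noncomputable def locErr (χ' : ℕ) (χ : ℕ → ℕ)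
    (Λ : (i : ℕ) → Matrix (Fin (χ i)) (Fin (χ i)) ℂ) (i : ℕ) : ℝ :=
  ∑ α : Fin (χ i), if χ' ≤ (α : ℕ) then ((Λ i α α).re) ^ 2 else 0

/-- Global truncation error `ε(χ') = ∑_{i=1}^{N-1} ε_i(χ')`. -/
noncomputable def globErr (N χ' : ℕ) (χ : ℕ → ℕ)
    (Λ : (i : ℕ) → Matrix (Fin (χ i)) (Fin (χ i)) ℂ) : ℝ :=
  ∑ i ∈ Finset.Ico 1 N, locErr χ' χ Λ i

section MPSAux

variable {d : ℕ} [NeZero d] (N χ' : ℕ) (χ : ℕ → ℕ)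
    (Γ : (i : ℕ) → Fin d → Matrix (Fin (χ i)) (Fin (χ (i + 1))) ℂ)
    (Λ : (i : ℕ) → Matrix (Fin (χ i)) (Fin (χ i)) ℂ)

/-- Bond insertion matrices of the truncated MPS. -/
noncomputable def mpsQ : (i : ℕ) → Matrix (Fin (χ i)) (Fin (χ i)) ℂ :=
  fun i => if i < N then truncP χ' (χ i) else 1

/-- Segment product from bond `j` to bond `e` with insertions `Q`. -/
noncomputable def mpsSeg (Q : (i : ℕ) → Matrix (Fin (χ i)) (Fin (χ i)) ℂ)
    (j e : ℕ) (σ : ℕ → Fin d) : Matrix (Fin (χ j)) (Fin (χ e)) ℂ :=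
  if h : j < e then
    Γ j (σ j) * Λ (j + 1) * Q (j + 1) * mpsSeg Q (j + 1) e σ
  else Matrix.of fun a b => if (a : ℕ) = (b : ℕ) then 1 else 0
termination_by e - j

def mpsExt {k : ℕ} (σ : Fin k → Fin d) : ℕ → Fin d :=
  fun j => if h : j < k then σ ⟨j, h⟩ else 0

def mpsExtFrom (j : ℕ) {m : ℕ} (σ : Fin m → Fin d) : ℕ → Fin d :=
  fun i => if h : j ≤ i ∧ i < j + m then σ ⟨i - j, by omega⟩ else 0

variable {χ}

lemma mpsSeg_refl (Q) (j : ℕ) (σ : ℕ → Fin d) : mpsSeg χ Γ Λ Q j j σ = 1 := by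
  rw [mpsSeg, dif_neg (lt_irrefl j)]
  ext a b
  simp [Matrix.one_apply, Fin.val_eq_val]

lemma mpsSeg_peel (Q) {j e : ℕ} (h : j < e) (σ : ℕ → Fin d) :
    mpsSeg χ Γ Λ Q j e σ =
      Γ j (σ j) * Λ (j + 1) * Q (j + 1) * mpsSeg χ Γ Λ Q (j + 1) e σ := by
  rw [mpsSeg, dif_pos h]

lemma mpsW_congr : ∀ (j : ℕ) (σ σ' : ℕ → Fin d), (∀ i, i < j → σ i = σ' i) →
    mpsW χ Γ Λ j σ = mpsW χ Γ Λ j σ'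
  | 0, σ, σ', _ => rfl
  | (j + 1), σ, σ', h => by
    show mpsW χ Γ Λ j σ * Γ j (σ j) * Λ (j + 1) = _
    rw [mpsW_congr j σ σ' (fun i hi => h i (by omega)), h j (by omega)]
    rfl

lemma mpsSeg_congr (Q) : ∀ (m j e : ℕ), e - j ≤ m → ∀ (σ σ' : ℕ → Fin d),
    (∀ i, j ≤ i → i < e → σ i = σ' i) → mpsSeg χ Γ Λ Q j e σ = mpsSeg χ Γ Λ Q j e σ'
  | 0, j, e, hm, σ, σ', h => by
    rw [mpsSeg, dif_neg (by omega)]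
    conv_rhs => rw [mpsSeg, dif_neg (by omega : ¬ j < e)]
  | (m + 1), j, e, hm, σ, σ', h => by
    by_cases hje : j < e
    · rw [mpsSeg_peel Γ Λ Q hje, mpsSeg_peel Γ Λ Q hje,
        mpsSeg_congr Q m (j + 1) e (by omega) σ σ' (fun i hi hi' => h i (by omega) hi'),
        h j le_rfl hje]
    · rw [mpsSeg, dif_neg hje]
      conv_rhs => rw [mpsSeg, dif_neg hje]

lemma mpsW_mul_seg : ∀ (m j e : ℕ), j + m = e → ∀ (σ : ℕ → Fin d),
    mpsW χ Γ Λ e σ = mpsW χ Γ Λ j σ * mpsSeg χ Γ Λ (fun _ => 1) j e σ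
  | 0, j, e, hm, σ => by
    obtain rfl : j = e := by omega
    rw [mpsSeg_refl, Matrix.mul_one]
  | (m + 1), j, e, hm, σ => by
    have hje : j < e := by omega
    rw [mpsW_mul_seg m (j + 1) e (by omega) σ, mpsSeg_peel Γ Λ _ hje]
    show mpsW χ Γ Λ j σ * Γ j (σ j) * Λ (j + 1) * _ = _
    simp only [mul_one, Matrix.mul_assoc]

lemma mpsWT_mul_seg : ∀ (m j e : ℕ), j + m = e → ∀ (σ : ℕ → Fin d),
    mpsWT N χ' χ Γ Λ e σ = mpsWT N χ' χ Γ Λ j σ * mpsSeg χ Γ Λ (mpsQ N χ' χ) j e σ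
  | 0, j, e, hm, σ => by
    obtain rfl : j = e := by omega
    rw [mpsSeg_refl, Matrix.mul_one]
  | (m + 1), j, e, hm, σ => by
    have hje : j < e := by omega
    rw [mpsWT_mul_seg m (j + 1) e (by omega) σ, mpsSeg_peel Γ Λ _ hje]
    show mpsWT N χ' χ Γ Λ j σ * Γ j (σ j) * Λ (j + 1) * (if j + 1 < N then truncP χ' (χ (j+1)) else 1) * _ = _
    show _ = mpsWT N χ' χ Γ Λ j σ * (Γ j (σ j) * Λ (j + 1) * (if j + 1 < N then truncP χ' (χ (j+1)) else 1) * _)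
    simp only [Matrix.mul_assoc]

end MPSAux

section Sums

variable {d : ℕ} [NeZero d] {N : ℕ} (χ' : ℕ) {χ : ℕ → ℕ}
    (Γ : (i : ℕ) → Fin d → Matrix (Fin (χ i)) (Fin (χ (i + 1))) ℂ)
    (Λ : (i : ℕ) → Matrix (Fin (χ i)) (Fin (χ i)) ℂ)

lemma mps_leftSum (hΛherm : ∀ i, i ≤ N → (Λ i)ᴴ = Λ i)
    (hcanoA : ∀ i, i < N → ∑ s : Fin d, (Λ i * Γ i s)ᴴ * (Λ i * Γ i s) = 1) :
    ∀ j, j ≤ N → ∑ σL : Fin j → Fin d,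
      (mpsW χ Γ Λ j (mpsExt σL))ᴴ * mpsW χ Γ Λ j (mpsExt σL) = Λ j * Λ j := by
  intro j
  induction j with
  | zero =>
    intro _
    rw [Fintype.sum_unique]
    show (Λ 0)ᴴ * Λ 0 = _
    rw [hΛherm 0 (by omega)]
  | succ j ih =>
    intro hj
    rw [← Equiv.sum_comp (Fin.snocEquiv (fun _ => Fin d)), Fintype.sum_prod_type]
    have key : ∀ (s : Fin d) (σL : Fin j → Fin d),
        mpsW χ Γ Λ (j + 1) (mpsExt (Fin.snocEquiv (fun _ => Fin d) (s, σL))) =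
        mpsW χ Γ Λ j (mpsExt σL) * Γ j s * Λ (j + 1) := by
      intro s σL
      have hval : ∀ i, i < j → mpsExt ((Fin.snocEquiv fun _ => Fin d) (s, σL)) i = mpsExt σL i := by
        intro i hi
        simp only [mpsExt, Fin.snocEquiv_apply]
        rw [dif_pos (show i < j + 1 by omega), dif_pos hi]
        have h2 : (⟨i, show i < j + 1 by omega⟩ : Fin (j + 1)) = Fin.castSucc ⟨i, hi⟩ := by
          apply Fin.ext; rfl
        rw [h2, Fin.snoc_castSucc]
      have hlast : mpsExt ((Fin.snocEquiv fun _ => Fin d) (s, σL)) j = s := by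
        simp only [mpsExt, Fin.snocEquiv_apply]
        rw [dif_pos (Nat.lt_succ_self j)]
        have h2 : (⟨j, Nat.lt_succ_self j⟩ : Fin (j + 1)) = Fin.last j := by
          apply Fin.ext; rfl
        rw [h2, Fin.snoc_last]
      show mpsW χ Γ Λ j _ * Γ j _ * Λ (j + 1) = _
      rw [mpsW_congr Γ Λ j _ _ hval, hlast]
    calc ∑ s : Fin d, ∑ σL : Fin j → Fin d,
          (mpsW χ Γ Λ (j+1) (mpsExt (Fin.snocEquiv (fun _ => Fin d) (s, σL))))ᴴ *
            mpsW χ Γ Λ (j+1) (mpsExt (Fin.snocEquiv (fun _ => Fin d) (s, σL)))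
        = ∑ s : Fin d, ∑ σL : Fin j → Fin d,
          (Λ (j+1))ᴴ * ((Γ j s)ᴴ * (((mpsW χ Γ Λ j (mpsExt σL))ᴴ * mpsW χ Γ Λ j (mpsExt σL)) *
            (Γ j s * Λ (j + 1)))) := by
          refine Finset.sum_congr rfl fun s _ => Finset.sum_congr rfl fun σL _ => ?_
          rw [key s σL]
          simp only [Matrix.conjTranspose_mul, Matrix.mul_assoc]
      _ = ∑ s : Fin d, (Λ (j+1))ᴴ * ((Γ j s)ᴴ * ((Λ j * Λ j) * (Γ j s * Λ (j + 1)))) := by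
          refine Finset.sum_congr rfl fun s _ => ?_
          rw [← Matrix.mul_sum, ← Matrix.mul_sum, ← Matrix.sum_mul, ih (by omega)]
      _ = (Λ (j+1))ᴴ * (∑ s : Fin d, (Λ j * Γ j s)ᴴ * (Λ j * Γ j s)) * Λ (j + 1) := by
          rw [Matrix.mul_sum, Matrix.sum_mul]
          refine Finset.sum_congr rfl fun s _ => ?_
          rw [Matrix.conjTranspose_mul, hΛherm j (by omega)]
          simp only [Matrix.mul_assoc]
      _ = Λ (j + 1) * Λ (j + 1) := by
          rw [hcanoA j (by omega), Matrix.mul_one, hΛherm (j+1) hj]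

end Sums
section Sums2
open ComplexOrder

variable {d : ℕ} [NeZero d] {N : ℕ} (χ' : ℕ) {χ : ℕ → ℕ}
    (Γ : (i : ℕ) → Fin d → Matrix (Fin (χ i)) (Fin (χ (i + 1))) ℂ)
    (Λ : (i : ℕ) → Matrix (Fin (χ i)) (Fin (χ i)) ℂ)

lemma posSemidef_sum {ι : Type*} (s : Finset ι) {n : ℕ} (f : ι → Matrix (Fin n) (Fin n) ℂ)
    (h : ∀ i ∈ s, (f i).PosSemidef) : (∑ i ∈ s, f i).PosSemidef :=
  Finset.sum_induction f Matrix.PosSemidef (fun _ _ ha hb => ha.add hb) Matrix.PosSemidef.zero h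

lemma mpsQ_diag (i : ℕ) : ∃ v : Fin (χ i) → ℂ,
    mpsQ N χ' χ i = Matrix.diagonal v ∧ ∀ b, v b = 0 ∨ v b = 1 := by
  by_cases h : i < N
  · refine ⟨fun α => if (α : ℕ) < χ' then 1 else 0, ?_, fun b => ?_⟩
    · show (if i < N then truncP χ' (χ i) else 1) = _
      rw [if_pos h]; rfl
    · dsimp only; split <;> simp
  · refine ⟨fun _ => 1, ?_, fun b => Or.inr rfl⟩
    show (if i < N then truncP χ' (χ i) else 1) = _
    rw [if_neg h, Matrix.diagonal_one]

lemma one_sub_QQH_psd (i : ℕ) :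
    ((1 : Matrix (Fin (χ i)) (Fin (χ i)) ℂ) -
      mpsQ N χ' χ i * (mpsQ N χ' χ i)ᴴ).PosSemidef := by
  obtain ⟨v, hv, hv01⟩ := mpsQ_diag (N := N) χ' (χ := χ) i
  rw [hv, Matrix.diagonal_conjTranspose, Matrix.diagonal_mul_diagonal, ← Matrix.diagonal_one,
    Matrix.diagonal_sub]
  refine Matrix.posSemidef_diagonal_iff.mpr fun b => ?_
  rcases hv01 b with h | h <;> simp [h, Pi.sub_apply, Pi.one_apply]

lemma cons_ext_key (j m : ℕ) (hj : j + (m + 1) = N) (s : Fin d) (σR : Fin m → Fin d) :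
    (∀ i, j + 1 ≤ i → i < N →
      mpsExtFrom j (Fin.consEquiv (fun _ => Fin d) (s, σR)) i = mpsExtFrom (j + 1) σR i) ∧
    mpsExtFrom j (Fin.consEquiv (fun _ => Fin d) (s, σR)) j = s := by
  constructor
  · intro i hi hiN
    simp only [mpsExtFrom, Fin.consEquiv_apply]
    rw [dif_pos (show j ≤ i ∧ i < j + (m + 1) by omega),
      dif_pos (show j + 1 ≤ i ∧ i < j + 1 + m by omega)]
    have h2 : (⟨i - j, by omega⟩ : Fin (m + 1)) = Fin.succ ⟨i - (j + 1), by omega⟩ := by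
      apply Fin.ext; simp [Fin.val_succ]; omega
    rw [h2, Fin.cons_succ]
  · simp only [mpsExtFrom, Fin.consEquiv_apply]
    rw [dif_pos (show j ≤ j ∧ j < j + (m + 1) by omega)]
    have h2 : (⟨j - j, by omega⟩ : Fin (m + 1)) = 0 := by
      apply Fin.ext; simp
    rw [h2, Fin.cons_zero]

lemma seg_cons (Q) (j m : ℕ) (hj : j + (m + 1) = N) (s : Fin d) (σR : Fin m → Fin d) :
    mpsSeg χ Γ Λ Q j N (mpsExtFrom j (Fin.consEquiv (fun _ => Fin d) (s, σR))) =
      Γ j s * Λ (j + 1) * Q (j + 1) * mpsSeg χ Γ Λ Q (j + 1) N (mpsExtFrom (j + 1) σR) := by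
  obtain ⟨htail, hhead⟩ := cons_ext_key (N := N) j m hj s σR
  rw [mpsSeg_peel Γ Λ Q (show j < N by omega), hhead,
    mpsSeg_congr Γ Λ Q (N - (j + 1)) (j + 1) N (by omega) _ _ htail]

lemma mps_rightSum
    (hcanoB : ∀ i, i < N → ∑ s : Fin d, (Γ i s * Λ (i+1)) * (Γ i s * Λ (i+1))ᴴ = 1) :
    ∀ (m j : ℕ), j + m = N → ∑ σR : Fin m → Fin d,
      mpsSeg χ Γ Λ (fun _ => 1) j N (mpsExtFrom j σR) *
        (mpsSeg χ Γ Λ (fun _ => 1) j N (mpsExtFrom j σR))ᴴ = 1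
  | 0, j, hm => by
    obtain rfl : j = N := by omega
    rw [Fintype.sum_unique, mpsSeg_refl, Matrix.conjTranspose_one, Matrix.mul_one]
  | (m + 1), j, hm => by
    rw [← Equiv.sum_comp (Fin.consEquiv (fun _ => Fin d)), Fintype.sum_prod_type]
    calc ∑ s : Fin d, ∑ σR : Fin m → Fin d,
          mpsSeg χ Γ Λ (fun _ => 1) j N (mpsExtFrom j ((Fin.consEquiv (fun _ => Fin d)) (s, σR))) *
            (mpsSeg χ Γ Λ (fun _ => 1) j N (mpsExtFrom j ((Fin.consEquiv (fun _ => Fin d)) (s, σR))))ᴴ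
        = ∑ s : Fin d, ∑ σR : Fin m → Fin d,
            (Γ j s * Λ (j + 1)) *
              ((mpsSeg χ Γ Λ (fun _ => 1) (j + 1) N (mpsExtFrom (j + 1) σR) *
                (mpsSeg χ Γ Λ (fun _ => 1) (j + 1) N (mpsExtFrom (j + 1) σR))ᴴ) *
              (Γ j s * Λ (j + 1))ᴴ) := by
          refine Finset.sum_congr rfl fun s _ => Finset.sum_congr rfl fun σR _ => ?_
          rw [seg_cons Γ Λ _ j m hm s σR, Matrix.mul_one]
          simp only [Matrix.conjTranspose_mul, Matrix.mul_assoc]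
      _ = ∑ s : Fin d, (Γ j s * Λ (j + 1)) * (Γ j s * Λ (j + 1))ᴴ := by
          refine Finset.sum_congr rfl fun s _ => ?_
          rw [← Matrix.mul_sum, ← Matrix.sum_mul, mps_rightSum hcanoB m (j + 1) (by omega),
            Matrix.one_mul]
      _ = 1 := hcanoB j (by omega)

lemma mps_rightSumT
    (hcanoB : ∀ i, i < N → ∑ s : Fin d, (Γ i s * Λ (i+1)) * (Γ i s * Λ (i+1))ᴴ = 1) :
    ∀ (m j : ℕ), j + m = N →
      ((1 : Matrix (Fin (χ j)) (Fin (χ j)) ℂ) - ∑ σR : Fin m → Fin d,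
        mpsSeg χ Γ Λ (mpsQ N χ' χ) j N (mpsExtFrom j σR) *
          (mpsSeg χ Γ Λ (mpsQ N χ' χ) j N (mpsExtFrom j σR))ᴴ).PosSemidef
  | 0, j, hm => by
    obtain rfl : j = N := by omega
    rw [Fintype.sum_unique, mpsSeg_refl, Matrix.conjTranspose_one, Matrix.mul_one, sub_self]
    exact .zero
  | (m + 1), j, hm => by
    have hjN : j < N := by omega
    set Q := mpsQ N χ' χ (j + 1) with hQ
    set T := ∑ σR : Fin m → Fin d,
        mpsSeg χ Γ Λ (mpsQ N χ' χ) (j + 1) N (mpsExtFrom (j + 1) σR) *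
          (mpsSeg χ Γ Λ (mpsQ N χ' χ) (j + 1) N (mpsExtFrom (j + 1) σR))ᴴ with hT
    have hsum : ∑ σR : Fin (m + 1) → Fin d,
        mpsSeg χ Γ Λ (mpsQ N χ' χ) j N (mpsExtFrom j σR) *
          (mpsSeg χ Γ Λ (mpsQ N χ' χ) j N (mpsExtFrom j σR))ᴴ
        = ∑ s : Fin d, (Γ j s * Λ (j + 1) * Q) * T * (Γ j s * Λ (j + 1) * Q)ᴴ := by
      rw [← Equiv.sum_comp (Fin.consEquiv (fun _ => Fin d)), Fintype.sum_prod_type]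
      refine Finset.sum_congr rfl fun s _ => ?_
      rw [Matrix.mul_sum, Matrix.sum_mul]
      refine Finset.sum_congr rfl fun σR _ => ?_
      rw [seg_cons Γ Λ _ j m hm s σR]
      simp only [Matrix.conjTranspose_mul, Matrix.mul_assoc, hQ]
    rw [hsum]
    have hkey : (1 : Matrix (Fin (χ j)) (Fin (χ j)) ℂ) -
        ∑ s : Fin d, (Γ j s * Λ (j + 1) * Q) * T * (Γ j s * Λ (j + 1) * Q)ᴴ
        = (∑ s : Fin d, (Γ j s * Λ (j + 1)) * (1 - Q * Qᴴ) * (Γ j s * Λ (j + 1))ᴴ) +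
          ∑ s : Fin d, (Γ j s * Λ (j + 1) * Q) * (1 - T) * (Γ j s * Λ (j + 1) * Q)ᴴ := by
      conv_lhs => rw [← hcanoB j hjN]
      rw [← Finset.sum_sub_distrib, ← Finset.sum_add_distrib]
      refine Finset.sum_congr rfl fun s _ => ?_
      simp only [Matrix.mul_sub, Matrix.sub_mul, Matrix.mul_one, Matrix.conjTranspose_mul,
        Matrix.mul_assoc]
      abel
    rw [hkey]
    refine Matrix.PosSemidef.add (posSemidef_sum _ _ fun s _ => ?_) (posSemidef_sum _ _ fun s _ => ?_)
    · exact (one_sub_QQH_psd (N := N) χ' (χ := χ) (j + 1)).mul_mul_conjTranspose_same _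
    · exact (mps_rightSumT hcanoB m (j + 1) (by omega)).mul_mul_conjTranspose_same _

end Sums2
section Sums3

open Finset in
lemma mps_sum_swap4 {ι κ μ ν : Type*} [Fintype ι] [Fintype κ] [Fintype μ] [Fintype ν]
    (f : ι → κ → μ → ν → ℂ) :
    ∑ a, ∑ b, ∑ c, ∑ e, f a b c e = ∑ c, ∑ e, ∑ a, ∑ b, f a b c e := by
  calc ∑ a, ∑ b, ∑ c, ∑ e, f a b c e
      = ∑ a, ∑ c, ∑ b, ∑ e, f a b c e :=
        Finset.sum_congr rfl fun a _ => Finset.sum_comm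
    _ = ∑ c, ∑ a, ∑ b, ∑ e, f a b c e := Finset.sum_comm
    _ = ∑ c, ∑ a, ∑ e, ∑ b, f a b c e :=
        Finset.sum_congr rfl fun c _ => Finset.sum_congr rfl fun a _ => Finset.sum_comm
    _ = ∑ c, ∑ e, ∑ a, ∑ b, f a b c e :=
        Finset.sum_congr rfl fun c _ => Finset.sum_comm

lemma mps_pair_expand {α β γ : Type*} [Fintype α] [Fintype β] [Fintype γ] [Unique α] [Unique γ]
    (L1 L2 : Matrix α β ℂ) (R1 R2 : Matrix β γ ℂ) :
    (starRingEnd ℂ) (∑ a, ∑ c, (L1 * R1) a c) * (∑ a, ∑ c, (L2 * R2) a c)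
    = ∑ b, ∑ b', (∑ a, (starRingEnd ℂ) (L1 a b) * L2 a b') *
        ((∑ c, (starRingEnd ℂ) (R1 b c)) * (∑ c, R2 b' c)) := by
  classical
  simp only [Matrix.mul_apply, Fintype.sum_unique, map_sum, _root_.map_mul]
  rw [Finset.sum_mul_sum]
  exact Finset.sum_congr rfl fun b _ => Finset.sum_congr rfl fun b' _ => by ring

variable {d : ℕ} [NeZero d] {N : ℕ} (χ' : ℕ) {χ : ℕ → ℕ}
    (Γ : (i : ℕ) → Fin d → Matrix (Fin (χ i)) (Fin (χ (i + 1))) ℂ)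
    (Λ : (i : ℕ) → Matrix (Fin (χ i)) (Fin (χ i)) ℂ)

/-- Splitting a configuration on `Fin N` into the first `k` sites and the rest. -/
def mpsGlueEquiv (k : ℕ) (hk : k ≤ N) :
    ((Fin k → Fin d) × (Fin (N - k) → Fin d)) ≃ (Fin N → Fin d) where
  toFun p := fun i => if h : (i : ℕ) < k then p.1 ⟨i, h⟩
    else p.2 ⟨(i : ℕ) - k, by have := i.2; omega⟩
  invFun σ := (fun a => σ ⟨a, by have := a.2; omega⟩, fun b => σ ⟨k + (b : ℕ), by have := b.2; omega⟩)
  left_inv p := by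
    ext x
    · dsimp only
      rw [dif_pos x.2]
    · dsimp only
      rw [dif_neg (by omega)]
      congr 1
      apply Fin.ext
      simp
  right_inv σ := by
    funext i
    dsimp only
    by_cases h : (i : ℕ) < k
    · rw [dif_pos h]
    · rw [dif_neg h]
      congr 1
      apply Fin.ext
      have := i.2
      simp only []
      omega

lemma mps_glue_left (k : ℕ) (hk : k ≤ N) (σL : Fin k → Fin d) (σR : Fin (N - k) → Fin d) :
    ∀ i, i < k → mpsExt (mpsGlueEquiv k hk (σL, σR)) i = mpsExt σL i := by
  intro i hi
  simp only [mpsExt, mpsGlueEquiv, Equiv.coe_fn_mk]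
  rw [dif_pos (show i < N by omega), dif_pos hi, dif_pos (show i < k from hi)]

lemma mps_glue_right (k : ℕ) (hk : k ≤ N) (σL : Fin k → Fin d) (σR : Fin (N - k) → Fin d) :
    ∀ i, k ≤ i → i < N → mpsExt (mpsGlueEquiv k hk (σL, σR)) i = mpsExtFrom k σR i := by
  intro i hik hiN
  simp only [mpsExt, mpsExtFrom, mpsGlueEquiv, Equiv.coe_fn_mk]
  rw [dif_pos hiN, dif_neg (show ¬ (i : ℕ) < k by omega),
    dif_pos (show k ≤ i ∧ i < k + (N - k) by omega)]

lemma mps_psi_glue (k : ℕ) (hk : k ≤ N) (σL : Fin k → Fin d) (σR : Fin (N - k) → Fin d) :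
    mpsPsi N χ Γ Λ (mpsGlueEquiv k hk (σL, σR)) =
      ∑ a, ∑ c, (mpsW χ Γ Λ k (mpsExt σL) *
        mpsSeg χ Γ Λ (fun _ => 1) k N (mpsExtFrom k σR)) a c := by
  show ∑ a, ∑ c, mpsW χ Γ Λ N (mpsExt (mpsGlueEquiv k hk (σL, σR))) a c = _
  rw [mpsW_mul_seg Γ Λ (N - k) k N (by omega),
    mpsW_congr Γ Λ k _ (mpsExt σL) (mps_glue_left k hk σL σR),
    mpsSeg_congr Γ Λ _ (N - k) k N (by omega) _ (mpsExtFrom k σR)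
      (mps_glue_right k hk σL σR)]

lemma mps_core (hχ0 : χ 0 = 1) (hχN : χ N = 1) (hχpos : ∀ i, 1 ≤ χ i)
    (hΛherm : ∀ i, i ≤ N → (Λ i)ᴴ = Λ i)
    (hcanoA : ∀ i, i < N → ∑ s : Fin d, (Λ i * Γ i s)ᴴ * (Λ i * Γ i s) = 1)
    (Q : (i : ℕ) → Matrix (Fin (χ i)) (Fin (χ i)) ℂ)
    (k : ℕ) (hk : k ≤ N) (M : Matrix (Fin (χ k)) (Fin (χ k)) ℂ) :
    ∑ σ : Fin N → Fin d, (starRingEnd ℂ) (mpsPsi N χ Γ Λ σ) *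
      (∑ a, ∑ c, (mpsW χ Γ Λ k (mpsExt σ) * M * mpsSeg χ Γ Λ Q k N (mpsExt σ)) a c)
    = ∑ b : Fin (χ k), ∑ b' : Fin (χ k), (Λ k * Λ k * M) b b' *
        ((∑ σR : Fin (N - k) → Fin d,
          (∑ c, (starRingEnd ℂ) (mpsSeg χ Γ Λ (fun _ => 1) k N (mpsExtFrom k σR) b c)) *
          (∑ c, mpsSeg χ Γ Λ Q k N (mpsExtFrom k σR) b' c))) := by
  classical
  haveI : Unique (Fin (χ 0)) :=
    ⟨⟨⟨0, by omega⟩⟩, fun a => Fin.ext (by have := a.2; omega)⟩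
  haveI : Unique (Fin (χ N)) :=
    ⟨⟨⟨0, by omega⟩⟩, fun a => Fin.ext (by have := a.2; omega)⟩
  calc ∑ σ : Fin N → Fin d, (starRingEnd ℂ) (mpsPsi N χ Γ Λ σ) *
      (∑ a, ∑ c, (mpsW χ Γ Λ k (mpsExt σ) * M * mpsSeg χ Γ Λ Q k N (mpsExt σ)) a c)
      = ∑ σL : Fin k → Fin d, ∑ σR : Fin (N - k) → Fin d,
          (starRingEnd ℂ) (mpsPsi N χ Γ Λ (mpsGlueEquiv k hk (σL, σR))) *
          (∑ a, ∑ c, (mpsW χ Γ Λ k (mpsExt (mpsGlueEquiv k hk (σL, σR))) * M *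
            mpsSeg χ Γ Λ Q k N (mpsExt (mpsGlueEquiv k hk (σL, σR)))) a c) := by
        rw [← Equiv.sum_comp (mpsGlueEquiv (N := N) (d := d) k hk), Fintype.sum_prod_type]
    _ = ∑ σL : Fin k → Fin d, ∑ σR : Fin (N - k) → Fin d, ∑ b, ∑ b',
          (∑ a, (starRingEnd ℂ) (mpsW χ Γ Λ k (mpsExt σL) a b) *
            (mpsW χ Γ Λ k (mpsExt σL) * M) a b') *
          ((∑ c, (starRingEnd ℂ) (mpsSeg χ Γ Λ (fun _ => 1) k N (mpsExtFrom k σR) b c)) *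
           (∑ c, mpsSeg χ Γ Λ Q k N (mpsExtFrom k σR) b' c)) := by
        refine Finset.sum_congr rfl fun σL _ => Finset.sum_congr rfl fun σR _ => ?_
        rw [mps_psi_glue Γ Λ k hk σL σR]
        have hW : mpsW χ Γ Λ k (mpsExt (mpsGlueEquiv k hk (σL, σR))) =
            mpsW χ Γ Λ k (mpsExt σL) :=
          mpsW_congr Γ Λ k _ _ (mps_glue_left k hk σL σR)
        have hS : mpsSeg χ Γ Λ Q k N (mpsExt (mpsGlueEquiv k hk (σL, σR))) =
            mpsSeg χ Γ Λ Q k N (mpsExtFrom k σR) :=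
          mpsSeg_congr Γ Λ Q (N - k) k N (by omega) _ _ (mps_glue_right k hk σL σR)
        rw [hW, hS]
        exact mps_pair_expand (mpsW χ Γ Λ k (mpsExt σL)) (mpsW χ Γ Λ k (mpsExt σL) * M)
          (mpsSeg χ Γ Λ (fun _ => 1) k N (mpsExtFrom k σR))
          (mpsSeg χ Γ Λ Q k N (mpsExtFrom k σR))
    _ = ∑ b, ∑ b', ∑ σL : Fin k → Fin d, ∑ σR : Fin (N - k) → Fin d,
          (∑ a, (starRingEnd ℂ) (mpsW χ Γ Λ k (mpsExt σL) a b) *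
            (mpsW χ Γ Λ k (mpsExt σL) * M) a b') *
          ((∑ c, (starRingEnd ℂ) (mpsSeg χ Γ Λ (fun _ => 1) k N (mpsExtFrom k σR) b c)) *
           (∑ c, mpsSeg χ Γ Λ Q k N (mpsExtFrom k σR) b' c)) := mps_sum_swap4 _
    _ = ∑ b, ∑ b', (∑ σL : Fin k → Fin d,
          ∑ a, (starRingEnd ℂ) (mpsW χ Γ Λ k (mpsExt σL) a b) *
            (mpsW χ Γ Λ k (mpsExt σL) * M) a b') *
          (∑ σR : Fin (N - k) → Fin d,
          (∑ c, (starRingEnd ℂ) (mpsSeg χ Γ Λ (fun _ => 1) k N (mpsExtFrom k σR) b c)) *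
           (∑ c, mpsSeg χ Γ Λ Q k N (mpsExtFrom k σR) b' c)) := by
        refine Finset.sum_congr rfl fun b _ => Finset.sum_congr rfl fun b' _ => ?_
        rw [Finset.sum_mul_sum]
    _ = ∑ b, ∑ b', (Λ k * Λ k * M) b b' *
          (∑ σR : Fin (N - k) → Fin d,
          (∑ c, (starRingEnd ℂ) (mpsSeg χ Γ Λ (fun _ => 1) k N (mpsExtFrom k σR) b c)) *
           (∑ c, mpsSeg χ Γ Λ Q k N (mpsExtFrom k σR) b' c)) := by
        refine Finset.sum_congr rfl fun b _ => Finset.sum_congr rfl fun b' _ => ?_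
        congr 1
        calc ∑ σL : Fin k → Fin d,
              ∑ a, (starRingEnd ℂ) (mpsW χ Γ Λ k (mpsExt σL) a b) *
                (mpsW χ Γ Λ k (mpsExt σL) * M) a b'
            = ∑ σL : Fin k → Fin d,
              ((mpsW χ Γ Λ k (mpsExt σL))ᴴ * mpsW χ Γ Λ k (mpsExt σL) * M) b b' := by
              refine Finset.sum_congr rfl fun σL _ => ?_
              rw [Matrix.mul_assoc, Matrix.mul_apply]
              exact Finset.sum_congr rfl fun a _ => by simp only [Matrix.conjTranspose_apply, Complex.star_def]
          _ = ((∑ σL : Fin k → Fin d,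
                (mpsW χ Γ Λ k (mpsExt σL))ᴴ * mpsW χ Γ Λ k (mpsExt σL)) * M) b b' := by
              rw [Matrix.sum_mul, Matrix.sum_apply]
          _ = (Λ k * Λ k * M) b b' := by
              rw [mps_leftSum Γ Λ hΛherm hcanoA k hk]

end Sums3
section Sums4
open ComplexOrder

lemma mps_psd_diag_re {n : ℕ} {A : Matrix (Fin n) (Fin n) ℂ} (hA : A.PosSemidef)
    (b : Fin n) : 0 ≤ (A b b).re := by
  have h := hA.re_dotProduct_nonneg (Pi.single b 1)
  have e : dotProduct (star (Pi.single b 1)) (A *ᵥ (Pi.single b 1 : Fin n → ℂ))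
      = A b b := by
    rw [← Pi.single_star, star_one, single_dotProduct, Matrix.mulVec_single]
    simp
  rwa [e] at h

variable {d : ℕ} [NeZero d] {N : ℕ} (χ' : ℕ) {χ : ℕ → ℕ}
    (Γ : (i : ℕ) → Fin d → Matrix (Fin (χ i)) (Fin (χ (i + 1))) ℂ)
    (Λ : (i : ℕ) → Matrix (Fin (χ i)) (Fin (χ i)) ℂ)

/-- The diagonal entry of the plain right-environment, as a real sum of squares. -/
lemma mps_right_normSq (hχN : χ N = 1) (hχpos : ∀ i, 1 ≤ χ i)
    (hcanoB : ∀ i, i < N → ∑ s : Fin d, (Γ i s * Λ (i+1)) * (Γ i s * Λ (i+1))ᴴ = 1)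
    (j : ℕ) (hj : j ≤ N) (b : Fin (χ j)) (c₀ : Fin (χ N)) :
    ∑ σR : Fin (N - j) → Fin d,
      Complex.normSq (mpsSeg χ Γ Λ (fun _ => 1) j N (mpsExtFrom j σR) b c₀) = 1 := by
  haveI : Unique (Fin (χ N)) :=
    ⟨⟨⟨0, by omega⟩⟩, fun a => Fin.ext (by have := a.2; omega)⟩
  have h := mps_rightSum Γ Λ hcanoB (N - j) j (by omega)
  have h2 := congrArg (fun (A : Matrix (Fin (χ j)) (Fin (χ j)) ℂ) => A b b) h
  simp only [Matrix.sum_apply, Matrix.mul_apply, Matrix.conjTranspose_apply,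
    Matrix.one_apply_eq] at h2
  have h3 : ∀ σR : Fin (N - j) → Fin d,
      (∑ c, mpsSeg χ Γ Λ (fun _ => 1) j N (mpsExtFrom j σR) b c *
        star (mpsSeg χ Γ Λ (fun _ => 1) j N (mpsExtFrom j σR) b c))
      = (Complex.normSq (mpsSeg χ Γ Λ (fun _ => 1) j N (mpsExtFrom j σR) b c₀) : ℂ) := by
    intro σR
    rw [Fintype.sum_unique]  -- needs default; c₀ = default by subsingleton
    rw [Subsingleton.elim (default : Fin (χ N)) c₀]
    exact Complex.mul_conj _
  rw [Finset.sum_congr rfl (fun σR _ => h3 σR)] at h2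
  have : ((∑ σR : Fin (N - j) → Fin d,
      Complex.normSq (mpsSeg χ Γ Λ (fun _ => 1) j N (mpsExtFrom j σR) b c₀) : ℝ) : ℂ) = 1 := by
    push_cast
    exact h2
  exact_mod_cast this

/-- The diagonal entry of the truncated right-environment is at most `1`. -/
lemma mps_rightT_normSq_le (hχN : χ N = 1) (hχpos : ∀ i, 1 ≤ χ i)
    (hcanoB : ∀ i, i < N → ∑ s : Fin d, (Γ i s * Λ (i+1)) * (Γ i s * Λ (i+1))ᴴ = 1)
    (j : ℕ) (hj : j ≤ N) (b : Fin (χ j)) (c₀ : Fin (χ N)) :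
    ∑ σR : Fin (N - j) → Fin d,
      Complex.normSq (mpsSeg χ Γ Λ (mpsQ N χ' χ) j N (mpsExtFrom j σR) b c₀) ≤ 1 := by
  haveI : Unique (Fin (χ N)) :=
    ⟨⟨⟨0, by omega⟩⟩, fun a => Fin.ext (by have := a.2; omega)⟩
  have h := mps_rightSumT χ' Γ Λ hcanoB (N - j) j (by omega)
  have h2 := mps_psd_diag_re h b
  set S := ∑ σR : Fin (N - j) → Fin d,
      mpsSeg χ Γ Λ (mpsQ N χ' χ) j N (mpsExtFrom j σR) *
        (mpsSeg χ Γ Λ (mpsQ N χ' χ) j N (mpsExtFrom j σR))ᴴ with hS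
  have hSbb : S b b = ((∑ σR : Fin (N - j) → Fin d,
      Complex.normSq (mpsSeg χ Γ Λ (mpsQ N χ' χ) j N (mpsExtFrom j σR) b c₀) : ℝ) : ℂ) := by
    rw [hS]
    simp only [Matrix.sum_apply, Matrix.mul_apply, Matrix.conjTranspose_apply]
    push_cast
    refine Finset.sum_congr rfl fun σR _ => ?_
    rw [Fintype.sum_unique, Subsingleton.elim (default : Fin (χ N)) c₀]
    exact Complex.mul_conj _
  rw [Matrix.sub_apply, Matrix.one_apply_eq, hSbb] at h2
  simp only [Complex.sub_re, Complex.one_re, Complex.ofReal_re] at h2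
  linarith

/-- Bound on the mixed right-environment diagonal entry. -/
lemma mps_RR_bound (hχN : χ N = 1) (hχpos : ∀ i, 1 ≤ χ i)
    (hcanoB : ∀ i, i < N → ∑ s : Fin d, (Γ i s * Λ (i+1)) * (Γ i s * Λ (i+1))ᴴ = 1)
    (j : ℕ) (hj : j ≤ N) (b : Fin (χ j)) :
    ‖(∑ σR : Fin (N - j) → Fin d,
      (∑ c, (starRingEnd ℂ) (mpsSeg χ Γ Λ (fun _ => 1) j N (mpsExtFrom j σR) b c)) *
      (∑ c, mpsSeg χ Γ Λ (mpsQ N χ' χ) j N (mpsExtFrom j σR) b c))‖ ≤ 1 := by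
  haveI : Unique (Fin (χ N)) :=
    ⟨⟨⟨0, by omega⟩⟩, fun a => Fin.ext (by have := a.2; omega)⟩
  set c₀ : Fin (χ N) := default with hc₀
  calc ‖(∑ σR : Fin (N - j) → Fin d,
      (∑ c, (starRingEnd ℂ) (mpsSeg χ Γ Λ (fun _ => 1) j N (mpsExtFrom j σR) b c)) *
      (∑ c, mpsSeg χ Γ Λ (mpsQ N χ' χ) j N (mpsExtFrom j σR) b c))‖
      ≤ ∑ σR : Fin (N - j) → Fin d, ‖((∑ c, (starRingEnd ℂ) (mpsSeg χ Γ Λ (fun _ => 1) j N (mpsExtFrom j σR) b c)) *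
          (∑ c, mpsSeg χ Γ Λ (mpsQ N χ' χ) j N (mpsExtFrom j σR) b c))‖ :=
        norm_sum_le _ _
    _ = ∑ σR : Fin (N - j) → Fin d,
          ‖(mpsSeg χ Γ Λ (fun _ => 1) j N (mpsExtFrom j σR) b c₀)‖ *
          ‖(mpsSeg χ Γ Λ (mpsQ N χ' χ) j N (mpsExtFrom j σR) b c₀)‖ := by
        refine Finset.sum_congr rfl fun σR _ => ?_
        rw [Fintype.sum_unique, Fintype.sum_unique, norm_mul,
          Complex.norm_conj]
    _ ≤ Real.sqrt (∑ σR : Fin (N - j) → Fin d,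
          ‖(mpsSeg χ Γ Λ (fun _ => 1) j N (mpsExtFrom j σR) b c₀)‖ ^ 2) *
        Real.sqrt (∑ σR : Fin (N - j) → Fin d,
          ‖(mpsSeg χ Γ Λ (mpsQ N χ' χ) j N (mpsExtFrom j σR) b c₀)‖ ^ 2) :=
        Real.sum_mul_le_sqrt_mul_sqrt _ _ _
    _ ≤ 1 := by
        have h1 : (∑ σR : Fin (N - j) → Fin d,
            ‖(mpsSeg χ Γ Λ (fun _ => 1) j N (mpsExtFrom j σR) b c₀)‖ ^ 2) = 1 := by
          rw [← mps_right_normSq Γ Λ hχN hχpos hcanoB j hj b c₀]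
          exact Finset.sum_congr rfl fun σR _ => (Complex.normSq_eq_norm_sq _).symm
        have h2 : (∑ σR : Fin (N - j) → Fin d,
            ‖(mpsSeg χ Γ Λ (mpsQ N χ' χ) j N (mpsExtFrom j σR) b c₀)‖ ^ 2) ≤ 1 := by
          calc ∑ σR : Fin (N - j) → Fin d,
              ‖(mpsSeg χ Γ Λ (mpsQ N χ' χ) j N (mpsExtFrom j σR) b c₀)‖ ^ 2
              = ∑ σR : Fin (N - j) → Fin d,
              Complex.normSq (mpsSeg χ Γ Λ (mpsQ N χ' χ) j N (mpsExtFrom j σR) b c₀) :=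
                Finset.sum_congr rfl fun σR _ => (Complex.normSq_eq_norm_sq _).symm
            _ ≤ 1 := mps_rightT_normSq_le χ' Γ Λ hχN hχpos hcanoB j hj b c₀
        rw [h1, Real.sqrt_one, one_mul]
        calc Real.sqrt _ ≤ Real.sqrt 1 := Real.sqrt_le_sqrt h2
          _ = 1 := Real.sqrt_one
end Sums4
section Sums5

variable {d : ℕ} [NeZero d] {N : ℕ} (χ' : ℕ) {χ : ℕ → ℕ}
    (Γ : (i : ℕ) → Fin d → Matrix (Fin (χ i)) (Fin (χ (i + 1))) ℂ)
    (Λ : (i : ℕ) → Matrix (Fin (χ i)) (Fin (χ i)) ℂ)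

lemma mps_locErr_nonneg (i : ℕ) : 0 ≤ locErr χ' χ Λ i := by
  refine Finset.sum_nonneg fun α _ => ?_
  split
  · positivity
  · exact le_rfl

lemma mps_locErr_N_zero (hχN : χ N = 1) (hχ' : 1 ≤ χ') : locErr χ' χ Λ N = 0 := by
  refine Finset.sum_eq_zero fun α _ => ?_
  rw [if_neg]
  have := α.2
  omega

lemma mps_cross_bound (hχ0 : χ 0 = 1) (hχN : χ N = 1) (hχpos : ∀ i, 1 ≤ χ i)
    (hΛherm : ∀ i, i ≤ N → (Λ i)ᴴ = Λ i)
    (hΛdiag : ∀ i, i ≤ N → (Λ i).IsDiag)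
    (hΛreal : ∀ i, i ≤ N → ∀ α, (Λ i α α).im = 0 ∧ 0 ≤ (Λ i α α).re)
    (hcanoA : ∀ i, i < N → ∑ s : Fin d, (Λ i * Γ i s)ᴴ * (Λ i * Γ i s) = 1)
    (hcanoB : ∀ i, i < N → ∑ s : Fin d, (Γ i s * Λ (i+1)) * (Γ i s * Λ (i+1))ᴴ = 1)
    (j : ℕ) (hj : j ≤ N) :
    ‖(∑ σ : Fin N → Fin d, (starRingEnd ℂ) (mpsPsi N χ Γ Λ σ) *
      (∑ a, ∑ c, (mpsW χ Γ Λ j (mpsExt σ) *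
        ((1 : Matrix (Fin (χ j)) (Fin (χ j)) ℂ) - mpsQ N χ' χ j) *
        mpsSeg χ Γ Λ (mpsQ N χ' χ) j N (mpsExt σ)) a c))‖ ≤ locErr χ' χ Λ j := by
  rw [mps_core Γ Λ hχ0 hχN hχpos hΛherm hcanoA (mpsQ N χ' χ) j hj (1 - mpsQ N χ' χ j)]
  by_cases hjN : j < N
  · have hQ : mpsQ N χ' χ j =
        Matrix.diagonal (fun α : Fin (χ j) => if (α : ℕ) < χ' then (1 : ℂ) else 0) := by
      show (if j < N then truncP χ' (χ j) else 1) = _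
      rw [if_pos hjN]; rfl
    set u : Fin (χ j) → ℂ :=
      fun b => (Λ j).diag b * (Λ j).diag b * (1 - if (b : ℕ) < χ' then 1 else 0) with hu_def
    have hu : Λ j * Λ j * (1 - mpsQ N χ' χ j) = Matrix.diagonal u := by
      conv_lhs => rw [← (hΛdiag j hj).diagonal_diag]
      rw [hQ, ← Matrix.diagonal_one, Matrix.diagonal_sub, Matrix.diagonal_mul_diagonal,
        Matrix.diagonal_mul_diagonal]
    set RR : Fin (χ j) → Fin (χ j) → ℂ := fun b b' =>
      ∑ σR : Fin (N - j) → Fin d,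
        (∑ c, (starRingEnd ℂ) (mpsSeg χ Γ Λ (fun _ => 1) j N (mpsExtFrom j σR) b c)) *
        (∑ c, mpsSeg χ Γ Λ (mpsQ N χ' χ) j N (mpsExtFrom j σR) b' c) with hRR
    have hcollapse : ∑ b, ∑ b', (Λ j * Λ j * (1 - mpsQ N χ' χ j)) b b' * RR b b'
        = ∑ b, u b * RR b b := by
      rw [hu]
      refine Finset.sum_congr rfl fun b _ => ?_
      rw [Fintype.sum_eq_single b (fun b' hb' => by
        rw [Matrix.diagonal_apply_ne u (Ne.symm hb'), zero_mul]),
        Matrix.diagonal_apply_eq]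
    rw [hcollapse]
    calc ‖(∑ b, u b * RR b b)‖
        ≤ ∑ b, ‖(u b * RR b b)‖ := norm_sum_le _ _
      _ = ∑ b, ‖(u b)‖ * ‖(RR b b)‖ :=
          Finset.sum_congr rfl fun b _ => norm_mul _ _
      _ ≤ ∑ b : Fin (χ j), (if χ' ≤ (b : ℕ) then ((Λ j b b).re) ^ 2 else 0) := by
          refine Finset.sum_le_sum fun b _ => ?_
          by_cases hb : (b : ℕ) < χ'
          · have : u b = 0 := by
              rw [hu_def]; dsimp only; rw [if_pos hb, sub_self, mul_zero]
            rw [this, norm_zero, zero_mul, if_neg (by omega)]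
          · have hre : Λ j b b = ((Λ j b b).re : ℂ) := by
              apply Complex.ext
              · rfl
              · simp [(hΛreal j hj b).1]
            have : u b = (((Λ j b b).re ^ 2 : ℝ) : ℂ) := by
              rw [hu_def]; dsimp only [Matrix.diag]
              rw [if_neg hb, sub_zero, mul_one]
              conv_lhs => rw [hre]
              rw [← Complex.ofReal_mul, ← sq]
            rw [this, if_pos (by omega)]
            calc ‖(((Λ j b b).re ^ 2 : ℝ) : ℂ)‖ * ‖(RR b b)‖
                ≤ ‖(((Λ j b b).re ^ 2 : ℝ) : ℂ)‖ * 1 := by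
                  refine mul_le_mul_of_nonneg_left ?_ (norm_nonneg _)
                  exact mps_RR_bound χ' Γ Λ hχN hχpos hcanoB j hj b
              _ = ((Λ j b b).re) ^ 2 := by
                  rw [mul_one, Complex.norm_real, Real.norm_eq_abs, abs_of_nonneg (by positivity)]
      _ = locErr χ' χ Λ j := rfl
  · have hQ : mpsQ N χ' χ j = 1 := by
      show (if j < N then truncP χ' (χ j) else 1) = 1
      rw [if_neg hjN]
    rw [hQ, sub_self, Matrix.mul_zero]
    simp only [Matrix.zero_apply, zero_mul, Finset.sum_const_zero, norm_zero]
    exact mps_locErr_nonneg χ' Λ j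

end Sums5
section Sums6

variable {d : ℕ} [NeZero d] {N : ℕ} (χ' : ℕ) {χ : ℕ → ℕ}
    (Γ : (i : ℕ) → Fin d → Matrix (Fin (χ i)) (Fin (χ (i + 1))) ℂ)
    (Λ : (i : ℕ) → Matrix (Fin (χ i)) (Fin (χ i)) ℂ)

lemma mps_psiT_eq (hΛ0 : Λ 0 = 1) (σ : Fin N → Fin d) :
    mpsPsiT N χ' χ Γ Λ σ = ∑ a, ∑ c, mpsSeg χ Γ Λ (mpsQ N χ' χ) 0 N (mpsExt σ) a c := by
  show ∑ a, ∑ c, mpsWT N χ' χ Γ Λ N (mpsExt σ) a c = _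
  rw [mpsWT_mul_seg N χ' Γ Λ N 0 N (by omega)]
  show ∑ a, ∑ c, (Λ 0 * mpsSeg χ Γ Λ (mpsQ N χ' χ) 0 N (mpsExt σ)) a c = _
  rw [hΛ0, Matrix.one_mul]

lemma mps_ext_eq_extFrom (σ : Fin N → Fin d) :
    ∀ i, 0 ≤ i → i < N → mpsExt σ i = mpsExtFrom 0 σ i := by
  intro i _ hiN
  simp only [mpsExt, mpsExtFrom]
  rw [dif_pos hiN, dif_pos (show 0 ≤ i ∧ i < 0 + N by omega)]
  exact congrArg σ (Fin.ext (by simp))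

lemma mps_psiT_norm_le (hΛ0 : Λ 0 = 1) (hχ0 : χ 0 = 1) (hχN : χ N = 1) (hχpos : ∀ i, 1 ≤ χ i)
    (hcanoB : ∀ i, i < N → ∑ s : Fin d, (Γ i s * Λ (i+1)) * (Γ i s * Λ (i+1))ᴴ = 1) :
    ∑ σ : Fin N → Fin d, ‖mpsPsiT N χ' χ Γ Λ σ‖ ^ 2 ≤ 1 := by
  haveI : Unique (Fin (χ 0)) :=
    ⟨⟨⟨0, by omega⟩⟩, fun a => Fin.ext (by have := a.2; omega)⟩
  haveI : Unique (Fin (χ N)) :=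
    ⟨⟨⟨0, by omega⟩⟩, fun a => Fin.ext (by have := a.2; omega)⟩
  have key : ∀ σ : Fin N → Fin d, mpsPsiT N χ' χ Γ Λ σ =
      mpsSeg χ Γ Λ (mpsQ N χ' χ) 0 N (mpsExtFrom 0 σ) default default := by
    intro σ
    rw [mps_psiT_eq χ' Γ Λ hΛ0 σ, Fintype.sum_unique, Fintype.sum_unique,
      mpsSeg_congr Γ Λ (mpsQ N χ' χ) N 0 N (by omega) _ _ (mps_ext_eq_extFrom σ)]
  calc ∑ σ : Fin N → Fin d, ‖mpsPsiT N χ' χ Γ Λ σ‖ ^ 2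
      = ∑ σ : Fin N → Fin d, Complex.normSq
          (mpsSeg χ Γ Λ (mpsQ N χ' χ) 0 N (mpsExtFrom 0 σ) default default) := by
        refine Finset.sum_congr rfl fun σ _ => ?_
        rw [key σ, ← Complex.normSq_eq_norm_sq]
    _ ≤ 1 := mps_rightT_normSq_le χ' Γ Λ hχN hχpos hcanoB 0 (by omega) default default

lemma mps_telescope (hΛ0 : Λ 0 = 1) (σ : Fin N → Fin d) :
    mpsPsi N χ Γ Λ σ - mpsPsiT N χ' χ Γ Λ σ =
      ∑ k ∈ Finset.range N, ∑ a, ∑ c,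
        (mpsW χ Γ Λ (k + 1) (mpsExt σ) *
          ((1 : Matrix (Fin (χ (k + 1))) (Fin (χ (k + 1))) ℂ) - mpsQ N χ' χ (k + 1)) *
          mpsSeg χ Γ Λ (mpsQ N χ' χ) (k + 1) N (mpsExt σ)) a c := by
  have hH := Finset.sum_range_sub (f := fun j => ∑ a, ∑ c,
    (mpsW χ Γ Λ j (mpsExt σ) * mpsSeg χ Γ Λ (mpsQ N χ' χ) j N (mpsExt σ)) a c) N
  have hHN : (∑ a, ∑ c,
      (mpsW χ Γ Λ N (mpsExt σ) * mpsSeg χ Γ Λ (mpsQ N χ' χ) N N (mpsExt σ)) a c)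
      = mpsPsi N χ Γ Λ σ := by
    rw [mpsSeg_refl, Matrix.mul_one]
    rfl
  have hH0 : (∑ a, ∑ c,
      (mpsW χ Γ Λ 0 (mpsExt σ) * mpsSeg χ Γ Λ (mpsQ N χ' χ) 0 N (mpsExt σ)) a c)
      = mpsPsiT N χ' χ Γ Λ σ := by
    rw [mps_psiT_eq χ' Γ Λ hΛ0 σ]
    show ∑ a, ∑ c, (Λ 0 * mpsSeg χ Γ Λ (mpsQ N χ' χ) 0 N (mpsExt σ)) a c = _
    rw [hΛ0, Matrix.one_mul]
  rw [← hHN, ← hH0, ← hH]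
  refine Finset.sum_congr rfl fun k hk => ?_
  have hkN : k < N := Finset.mem_range.mp hk
  have hpeel := mpsSeg_peel Γ Λ (mpsQ N χ' χ) (show k < N from hkN) (mpsExt σ)
  have hW : mpsW χ Γ Λ (k + 1) (mpsExt σ) =
      mpsW χ Γ Λ k (mpsExt σ) * Γ k (mpsExt σ k) * Λ (k + 1) := rfl
  have hexpand : mpsW χ Γ Λ (k + 1) (mpsExt σ) *
      ((1 : Matrix (Fin (χ (k + 1))) (Fin (χ (k + 1))) ℂ) - mpsQ N χ' χ (k + 1)) *
      mpsSeg χ Γ Λ (mpsQ N χ' χ) (k + 1) N (mpsExt σ)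
      = mpsW χ Γ Λ (k + 1) (mpsExt σ) * mpsSeg χ Γ Λ (mpsQ N χ' χ) (k + 1) N (mpsExt σ) -
        mpsW χ Γ Λ k (mpsExt σ) * mpsSeg χ Γ Λ (mpsQ N χ' χ) k N (mpsExt σ) := by
    rw [Matrix.mul_sub, Matrix.mul_one, Matrix.sub_mul, hpeel]
    congr 1
    rw [hW]
    simp only [Matrix.mul_assoc]
  rw [hexpand]
  simp only [Matrix.sub_apply, Finset.sum_sub_distrib]

end Sums6

/-- Theorem 1 of the paper, distance bound: for an `N`-site MPS in
canonical form with normalized wavefunction, the parallel MPS compression obtained by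
inserting the rank-`χ'` projector at every interior bond satisfies
`∑_σ |Ψ(σ) − Ψ̃_T(σ)|² ≤ 2 ε(χ')`. -/
theorem parallel_mps_compression_distance_bound
    (N d : ℕ) [NeZero d] (hN : 1 ≤ N)
    (χ : ℕ → ℕ) (hχ0 : χ 0 = 1) (hχN : χ N = 1) (hχpos : ∀ i, 1 ≤ χ i)
    (Γ : (i : ℕ) → Fin d → Matrix (Fin (χ i)) (Fin (χ (i + 1))) ℂ)
    (Λ : (i : ℕ) → Matrix (Fin (χ i)) (Fin (χ i)) ℂ)
    (hΛ0 : Λ 0 = 1) (hΛN : Λ N = 1)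
    (hΛdiag : ∀ i ≤ N, (Λ i).IsDiag)
    (hΛreal : ∀ i ≤ N, ∀ α, (Λ i α α).im = 0 ∧ 0 ≤ (Λ i α α).re)
    (hΛdesc : ∀ i ≤ N, ∀ α β : Fin (χ i), α ≤ β → (Λ i β β).re ≤ (Λ i α α).re)
    (hcano : IsCanonicalMPS N χ Γ Λ)
    (hnorm : ∑ σ : Fin N → Fin d, ‖mpsPsi N χ Γ Λ σ‖ ^ 2 = 1)
    (χ' : ℕ) (hχ' : 1 ≤ χ') :
    ∑ σ : Fin N → Fin d, ‖mpsPsi N χ Γ Λ σ - mpsPsiT N χ' χ Γ Λ σ‖ ^ 2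
      ≤ 2 * globErr N χ' χ Λ := by
  classical
  have hΛherm : ∀ i, i ≤ N → (Λ i)ᴴ = Λ i := by
    intro i hi
    ext α β
    rw [Matrix.conjTranspose_apply]
    by_cases hab : β = α
    · subst hab
      have him := (hΛreal i hi β).1
      apply Complex.ext
      · simp
      · simp [him]
    · rw [hΛdiag i hi hab, star_zero, hΛdiag i hi (fun h => hab h.symm)]
  have hcanoA : ∀ i, i < N → ∑ s : Fin d, (Λ i * Γ i s)ᴴ * (Λ i * Γ i s) = 1 :=
    fun i hi => (hcano i hi).1
  have hcanoB : ∀ i, i < N → ∑ s : Fin d, (Γ i s * Λ (i+1)) * (Γ i s * Λ (i+1))ᴴ = 1 :=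
    fun i hi => (hcano i hi).2
  have hΛdiag' : ∀ i, i ≤ N → (Λ i).IsDiag := fun i hi => hΛdiag i hi
  have hΛreal' : ∀ i, i ≤ N → ∀ α, (Λ i α α).im = 0 ∧ 0 ≤ (Λ i α α).re :=
    fun i hi => hΛreal i hi
  have htel := fun σ : Fin N → Fin d => mps_telescope χ' Γ Λ hΛ0 σ
  have hcross : ∀ k ∈ Finset.range N, ‖(∑ σ : Fin N → Fin d,
      (starRingEnd ℂ) (mpsPsi N χ Γ Λ σ) * (∑ a, ∑ c, (mpsW χ Γ Λ (k+1) (mpsExt σ) *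
        ((1 : Matrix (Fin (χ (k+1))) (Fin (χ (k+1))) ℂ) - mpsQ N χ' χ (k+1)) *
        mpsSeg χ Γ Λ (mpsQ N χ' χ) (k+1) N (mpsExt σ)) a c))‖ ≤ locErr χ' χ Λ (k+1) :=
    fun k hk => mps_cross_bound χ' Γ Λ hχ0 hχN hχpos hΛherm hΛdiag' hΛreal'
      hcanoA hcanoB (k+1) (by have := Finset.mem_range.mp hk; omega)
  have hnormC : (∑ σ : Fin N → Fin d,
      (starRingEnd ℂ) (mpsPsi N χ Γ Λ σ) * mpsPsi N χ Γ Λ σ) = 1 := by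
    have h1 : ∀ z : ℂ, (starRingEnd ℂ) z * z = ((‖z‖ ^ 2 : ℝ) : ℂ) := by
      intro z
      rw [mul_comm, Complex.mul_conj]
      norm_cast
      rw [Complex.normSq_eq_norm_sq]
    rw [Finset.sum_congr rfl fun σ _ => h1 _, ← Complex.ofReal_sum, hnorm,
      Complex.ofReal_one]
  have hsplit2 : (∑ σ : Fin N → Fin d,
      (starRingEnd ℂ) (mpsPsi N χ Γ Λ σ) * mpsPsiT N χ' χ Γ Λ σ)
      = 1 - ∑ k ∈ Finset.range N, ∑ σ : Fin N → Fin d,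
          (starRingEnd ℂ) (mpsPsi N χ Γ Λ σ) * (∑ a, ∑ c, (mpsW χ Γ Λ (k+1) (mpsExt σ) *
            ((1 : Matrix (Fin (χ (k+1))) (Fin (χ (k+1))) ℂ) - mpsQ N χ' χ (k+1)) *
            mpsSeg χ Γ Λ (mpsQ N χ' χ) (k+1) N (mpsExt σ)) a c) := by
    have step1 : ∀ σ : Fin N → Fin d,
        (starRingEnd ℂ) (mpsPsi N χ Γ Λ σ) * mpsPsiT N χ' χ Γ Λ σ
        = (starRingEnd ℂ) (mpsPsi N χ Γ Λ σ) * mpsPsi N χ Γ Λ σ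
          - ∑ k ∈ Finset.range N, (starRingEnd ℂ) (mpsPsi N χ Γ Λ σ) *
            (∑ a, ∑ c, (mpsW χ Γ Λ (k+1) (mpsExt σ) *
              ((1 : Matrix (Fin (χ (k+1))) (Fin (χ (k+1))) ℂ) - mpsQ N χ' χ (k+1)) *
              mpsSeg χ Γ Λ (mpsQ N χ' χ) (k+1) N (mpsExt σ)) a c) := by
      intro σ
      rw [← Finset.mul_sum, ← htel σ]
      ring
    rw [Finset.sum_congr rfl fun σ _ => step1 σ, Finset.sum_sub_distrib, hnormC,
      Finset.sum_comm]
  have hub : ∑ k ∈ Finset.range N, locErr χ' χ Λ (k+1) = globErr N χ' χ Λ := by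
    have h2 : ∑ i ∈ Finset.Ico 1 (N+1), locErr χ' χ Λ i
        = ∑ k ∈ Finset.range N, locErr χ' χ Λ (k+1) := by
      rw [Finset.sum_Ico_eq_sum_range]
      simp only [Nat.add_sub_cancel]
      exact Finset.sum_congr rfl fun k _ => by rw [Nat.add_comm]
    rw [← h2, Finset.sum_Ico_succ_top (by omega : 1 ≤ N),
      mps_locErr_N_zero χ' Λ hχN hχ', add_zero]
    rfl
  have hreIP : 1 - globErr N χ' χ Λ ≤ (∑ σ : Fin N → Fin d,
      (starRingEnd ℂ) (mpsPsi N χ Γ Λ σ) * mpsPsiT N χ' χ Γ Λ σ).re := by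
    rw [hsplit2]
    simp only [Complex.sub_re, Complex.one_re]
    have habs : (∑ k ∈ Finset.range N, ∑ σ : Fin N → Fin d,
        (starRingEnd ℂ) (mpsPsi N χ Γ Λ σ) * (∑ a, ∑ c, (mpsW χ Γ Λ (k+1) (mpsExt σ) *
          ((1 : Matrix (Fin (χ (k+1))) (Fin (χ (k+1))) ℂ) - mpsQ N χ' χ (k+1)) *
          mpsSeg χ Γ Λ (mpsQ N χ' χ) (k+1) N (mpsExt σ)) a c)).re
        ≤ globErr N χ' χ Λ := by
      calc (∑ k ∈ Finset.range N, ∑ σ : Fin N → Fin d,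
          (starRingEnd ℂ) (mpsPsi N χ Γ Λ σ) * (∑ a, ∑ c, (mpsW χ Γ Λ (k+1) (mpsExt σ) *
            ((1 : Matrix (Fin (χ (k+1))) (Fin (χ (k+1))) ℂ) - mpsQ N χ' χ (k+1)) *
            mpsSeg χ Γ Λ (mpsQ N χ' χ) (k+1) N (mpsExt σ)) a c)).re
          ≤ ‖(∑ k ∈ Finset.range N, ∑ σ : Fin N → Fin d,
            (starRingEnd ℂ) (mpsPsi N χ Γ Λ σ) * (∑ a, ∑ c, (mpsW χ Γ Λ (k+1) (mpsExt σ) *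
              ((1 : Matrix (Fin (χ (k+1))) (Fin (χ (k+1))) ℂ) - mpsQ N χ' χ (k+1)) *
              mpsSeg χ Γ Λ (mpsQ N χ' χ) (k+1) N (mpsExt σ)) a c))‖ := Complex.re_le_norm _
        _ ≤ ∑ k ∈ Finset.range N, ‖(∑ σ : Fin N → Fin d,
            (starRingEnd ℂ) (mpsPsi N χ Γ Λ σ) * (∑ a, ∑ c, (mpsW χ Γ Λ (k+1) (mpsExt σ) *
              ((1 : Matrix (Fin (χ (k+1))) (Fin (χ (k+1))) ℂ) - mpsQ N χ' χ (k+1)) *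
              mpsSeg χ Γ Λ (mpsQ N χ' χ) (k+1) N (mpsExt σ)) a c))‖ := norm_sum_le _ _
        _ ≤ ∑ k ∈ Finset.range N, locErr χ' χ Λ (k+1) := Finset.sum_le_sum hcross
        _ = globErr N χ' χ Λ := hub
    linarith
  have hexp : ∀ z w : ℂ, ‖z - w‖ ^ 2
      = ‖z‖ ^ 2 + ‖w‖ ^ 2 - 2 * ((starRingEnd ℂ) z * w).re := by
    intro z w
    rw [← Complex.normSq_eq_norm_sq, ← Complex.normSq_eq_norm_sq, ← Complex.normSq_eq_norm_sq,
      Complex.normSq_sub]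
    rw [show ((starRingEnd ℂ) z * w) = (starRingEnd ℂ) (z * (starRingEnd ℂ) w) by
      rw [_root_.map_mul, Complex.conj_conj], Complex.conj_re]
  have hTnorm := mps_psiT_norm_le χ' Γ Λ hΛ0 hχ0 hχN hχpos hcanoB
  have hfinal : ∑ σ : Fin N → Fin d, ‖mpsPsi N χ Γ Λ σ - mpsPsiT N χ' χ Γ Λ σ‖ ^ 2
      = (∑ σ : Fin N → Fin d, ‖mpsPsi N χ Γ Λ σ‖ ^ 2)
        + (∑ σ : Fin N → Fin d, ‖mpsPsiT N χ' χ Γ Λ σ‖ ^ 2)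
        - 2 * (∑ σ : Fin N → Fin d,
            (starRingEnd ℂ) (mpsPsi N χ Γ Λ σ) * mpsPsiT N χ' χ Γ Λ σ).re := by
    rw [Complex.re_sum, Finset.mul_sum, ← Finset.sum_add_distrib, ← Finset.sum_sub_distrib]
    exact Finset.sum_congr rfl fun σ _ => hexp _ _
  rw [hfinal, hnorm]
  linarith
end

section
/- Let N ≥ 1, d ≥ 1, and let χ : {0,1,…,N} → ℕ satisfy χ(i) ≥ 1. For each i = 1,…,N let A^{[i]} : Fin d → Matrix (Fin χ(i−1)) (Fin χ(i)) ℂ satisfy the isometry condition Σ_σ (A^{[i]σ})ᴴ A^{[i]σ} = I_{χ(i)}, and for each i = 1,…,N−1 let P_i ∈ Matrix (Fin χ(i)) (Fin χ(i)) ℂ be an orthogonal projection (P_iᴴ = P_i, P_i * P_i = P_i). Let Y^{[N]} ∈ Matrix (Fin χ(N−1)) (Fin χ(N−1)) ℂ be positive semidefinite and define Y^{[i]} = Σ_σ A^{[i]σ} (P_i Y^{[i+1]} P_i) (A^{[i]σ})ᴴ for i = N−1, …, 1. Then every Y^{[i]} is positive semidefinite and Tr(Y^{[1]}) ≤ Tr(Y^{[N]}).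 In particular, if Tr(Y^{[N]}) = 1 then Tr(Y^{[1]}) ≤ 1. -/
open Matrix
open scoped ComplexOrder

private lemma psd_trace_nonneg {n : ℕ} {M : Matrix (Fin n) (Fin n) ℂ}
    (hM : M.PosSemidef) : 0 ≤ M.trace := by
  rw [Matrix.trace]
  apply Finset.sum_nonneg
  intro i _
  exact hM.diag_nonneg

private lemma psd_sum {n m : ℕ} {s : Finset (Fin m)}
    {f : Fin m → Matrix (Fin n) (Fin n) ℂ} (h : ∀ i ∈ s, (f i).PosSemidef) :
    (∑ i ∈ s, f i).PosSemidef := by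
  classical
  induction s using Finset.induction_on with
  | empty => simpa using Matrix.PosSemidef.zero
  | @insert a t hx ih =>
    rw [Finset.sum_insert hx]
    exact (h a (Finset.mem_insert_self a t)).add
      (ih fun i hi => h i (Finset.mem_insert_of_mem hi))

private lemma proj_trace_le {n : ℕ} {M Q : Matrix (Fin n) (Fin n) ℂ}
    (hM : M.PosSemidef) (hQh : Qᴴ = Q) (hQ2 : Q * Q = Q) :
    (Q * M * Q).trace ≤ M.trace := by
  have hR : ((1 - Q) * M * (1 - Q)).PosSemidef := by
    have := hM.mul_mul_conjTranspose_same (1 - Q)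
    simpa [Matrix.conjTranspose_sub, hQh] using this
  have h1 : ((1 - Q) * M * (1 - Q)).trace = M.trace - (Q * M * Q).trace := by
    have hQMQ : (Q * M * Q).trace = (M * Q).trace := by
      rw [Matrix.trace_mul_cycle, hQ2, Matrix.trace_mul_comm]
    have h2 : ((1 - Q) * M * (1 - Q)).trace = (M * (1 - Q)).trace := by
      rw [Matrix.trace_mul_cycle,
        show (1 - Q) * (1 - Q) = 1 - Q by
          simp [Matrix.mul_sub, Matrix.sub_mul, hQ2],
        Matrix.trace_mul_comm]
    rw [h2, hQMQ, Matrix.mul_sub, Matrix.trace_sub, Matrix.mul_one]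
  have := psd_trace_nonneg hR
  rw [h1] at this
  exact sub_nonneg.mp this

/-- multi-step trace monotonicity, core of the proof of Lemma 2 of the
paper: with left-isometric site tensors `A` (the tensor `A i` belongs to site `i + 1`),
orthogonal projections `P i` on the interior bonds `i = 1, …, N − 1`, a positive
semidefinite seed `Y (N−1) = Y^{[N]}` on bond `N − 1`, and the downward recursion
`Y^{[i]} = ∑_σ A^{[i]σ} (P_i Y^{[i+1]} P_i) (A^{[i]σ})ᴴ` (here `Y j = Y^{[j+1]}` lives on
bond `j`), every `Y j` is positive semidefinite and `Tr(Y^{[1]}) ≤ Tr(Y^{[N]})`;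
in particular `Tr(Y^{[N]}) = 1` implies `Tr(Y^{[1]}) ≤ 1`. -/
theorem transfer_recursion_trace_monotone
    (N d : ℕ) [NeZero d] (hN : 1 ≤ N)
    (χ : ℕ → ℕ) (hχpos : ∀ i, 1 ≤ χ i)
    (A : (i : ℕ) → Fin d → Matrix (Fin (χ i)) (Fin (χ (i + 1))) ℂ)
    (hA : ∀ i < N, ∑ s : Fin d, (A i s)ᴴ * A i s = 1)
    (P : (i : ℕ) → Matrix (Fin (χ i)) (Fin (χ i)) ℂ)
    (hP : ∀ i, 1 ≤ i → i < N → (P i)ᴴ = P i ∧ P i * P i = P i)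
    (Y : (j : ℕ) → Matrix (Fin (χ j)) (Fin (χ j)) ℂ)
    (hYN : (Y (N - 1)).PosSemidef)
    (hYrec : ∀ j, j + 1 < N →
      Y j = ∑ s : Fin d, A j s * (P (j + 1) * Y (j + 1) * P (j + 1)) * (A j s)ᴴ) :
    (∀ j < N, (Y j).PosSemidef) ∧
      (Y 0).trace ≤ (Y (N - 1)).trace ∧
      ((Y (N - 1)).trace = 1 → (Y 0).trace ≤ 1) := by
  -- key step: for j+1 < N, Y j is psd and trace (Y j) ≤ trace (Y (j+1)),
  -- given Y (j+1) psd
  have step : ∀ j, j + 1 < N → (Y (j + 1)).PosSemidef →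
      (Y j).PosSemidef ∧ (Y j).trace ≤ (Y (j + 1)).trace := by
    intro j hj hYj1
    obtain ⟨hQh, hQ2⟩ := hP (j + 1) (Nat.le_add_left 1 j) hj
    set Q := P (j + 1)
    have hM : (Q * Y (j + 1) * Q).PosSemidef := by
      have := hYj1.mul_mul_conjTranspose_same Q
      simpa [hQh] using this
    constructor
    · rw [hYrec j hj]
      exact psd_sum fun s _ => hM.mul_mul_conjTranspose_same (A j s)
    · have htr : (Y j).trace = (Q * Y (j + 1) * Q).trace := by
        rw [hYrec j hj, Matrix.trace_sum]
        have : ∀ s : Fin d,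
            (A j s * (Q * Y (j + 1) * Q) * (A j s)ᴴ).trace =
            ((A j s)ᴴ * A j s * (Q * Y (j + 1) * Q)).trace := by
          intro s
          rw [Matrix.trace_mul_cycle, Matrix.mul_assoc]
        rw [Finset.sum_congr rfl fun s _ => this s]
        rw [← Matrix.trace_sum, ← Finset.sum_mul, hA j (by omega), Matrix.one_mul]
      rw [htr]
      exact proj_trace_le hYj1 hQh hQ2
  -- downward induction
  have main : ∀ m j, j + m = N - 1 →
      (Y j).PosSemidef ∧ (Y j).trace ≤ (Y (N - 1)).trace := by
    intro m
    induction m with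
    | zero => intro j hj; simp only [Nat.add_zero] at hj; subst hj; exact ⟨hYN, le_refl _⟩
    | succ m ih =>
      intro j hj
      have hj1 : (j + 1) + m = N - 1 := by omega
      obtain ⟨hpsd1, htr1⟩ := ih (j + 1) hj1
      have hjN : j + 1 < N := by omega
      obtain ⟨hpsd, htr⟩ := step j hjN hpsd1
      exact ⟨hpsd, le_trans htr htr1⟩
  refine ⟨?_, ?_, ?_⟩
  · intro j hjN
    exact (main (N - 1 - j) j (by omega)).1
  · exact (main (N - 1) 0 (by omega)).2
  · intro h1
    have := (main (N - 1) 0 (by omega)).2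
    rw [h1] at this
    exact this
end
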